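/- The improper integral ∫₀^∞ (e^s/2)(√(1 - e^{-2s}) - 1)² ds converges and equals (π - 3)/2. -/

import Mathlib

open MeasureTheory Real Set Filter Topology

noncomputable def Gaux (s : ℝ) : ℝ :=
  -Real.arcsin (Real.exp (-s)) + Real.exp (-s) / (1 + Real.sqrt (1 - Real.exp (-2*s)))
    + Real.exp (-s) / 2

lemma Gaux_cont : Continuous Gaux := by
  have h1 : Continuous fun s : ℝ => Real.exp (-s) := Real.continuous_exp.comp continuous_neg
  have h2 : Continuous fun s : ℝ => Real.exp (-2*s) :=
    Real.continuous_exp.comp (continuous_const.mul continuous_id)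
  have hw : Continuous fun s : ℝ => Real.sqrt (1 - Real.exp (-2*s)) :=
    Real.continuous_sqrt.comp (continuous_const.sub h2)
  have hd : ∀ s : ℝ, (1 : ℝ) + Real.sqrt (1 - Real.exp (-2*s)) ≠ 0 := fun s => by positivity
  exact ((Real.continuous_arcsin.comp h1).neg.add (h1.div (continuous_const.add hw) hd)).add
    (h1.div_const 2)

lemma Gaux_tendsto : Tendsto Gaux atTop (𝓝 0) := by
  have h0 : Tendsto (fun s : ℝ => Real.exp (-s)) atTop (𝓝 0) :=
    Real.tendsto_exp_atBot.comp tendsto_neg_atTop_atBot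
  have h2 : Tendsto (fun s : ℝ => Real.exp (-2*s)) atTop (𝓝 0) := by
    apply Real.tendsto_exp_atBot.comp
    exact (tendsto_const_mul_atBot_of_neg (by norm_num)).mpr tendsto_id
  have key : Tendsto Gaux atTop
      (𝓝 (-Real.arcsin 0 + 0 / (1 + Real.sqrt (1 - 0)) + 0 / 2)) :=
    (((Real.continuous_arcsin.tendsto 0).comp h0).neg.add
      (h0.div (tendsto_const_nhds.add ((Real.continuous_sqrt.tendsto _).comp
        (tendsto_const_nhds.sub h2))) (by norm_num))).add (h0.div_const 2)
  simpa using key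

lemma Gaux_deriv (x : ℝ) (hx : x ∈ Ioi (0:ℝ)) :
    HasDerivAt Gaux (Real.exp x / 2 * (Real.sqrt (1 - Real.exp (-2 * x)) - 1) ^ 2) x := by
  have hx0 : 0 < x := hx
  set u := Real.exp (-x) with hu
  have hu1 : u < 1 := by
    rw [hu]
    calc Real.exp (-x) < Real.exp 0 := Real.exp_lt_exp.mpr (by linarith)
    _ = 1 := Real.exp_zero
  have hupos : 0 < u := Real.exp_pos _
  have h2x : Real.exp (-2*x) = u^2 := by rw [hu, ← Real.exp_nat_mul]; ring_nf
  have hin : (0:ℝ) < 1 - Real.exp (-2*x) := by rw [h2x]; nlinarith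
  set w := Real.sqrt (1 - Real.exp (-2*x)) with hw
  have hwpos : 0 < w := Real.sqrt_pos.mpr hin
  have hwsq : w^2 = 1 - u^2 := by rw [hw, Real.sq_sqrt hin.le, h2x]
  have hux : Real.exp x * u = 1 := by rw [hu, ← Real.exp_add]; simp
  have d1 : HasDerivAt (fun s : ℝ => Real.exp (-s)) (-u) x := by
    have := (hasDerivAt_neg x).exp
    simpa [hu] using this
  have d2 : HasDerivAt (fun s : ℝ => Real.exp (-2*s)) (-2 * u^2) x := by
    have hi : HasDerivAt (fun s : ℝ => -2*s) (-2) x := by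
      simpa using (hasDerivAt_id x).const_mul (-2:ℝ)
    have := hi.exp
    convert this using 1
    rw [h2x]; ring
  have d3 : HasDerivAt (fun s : ℝ => 1 - Real.exp (-2*s)) (2 * u^2) x := by
    simpa using d2.const_sub 1
  have d4 : HasDerivAt (fun s : ℝ => Real.sqrt (1 - Real.exp (-2*s))) (u^2 / w) x := by
    have := (Real.hasDerivAt_sqrt hin.ne').comp x d3
    refine this.congr_deriv (Eq.symm ?_)
    rw [← hw]; field_simp
  have d5 : HasDerivAt (fun s : ℝ => Real.arcsin (Real.exp (-s))) (-u / w) x := by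
    have harc := Real.hasDerivAt_arcsin (by linarith : u ≠ -1) (ne_of_lt hu1)
    have := harc.comp x d1
    refine this.congr_deriv (Eq.symm ?_)
    rw [hw, h2x]
    field_simp
  have d6 : HasDerivAt (fun s : ℝ => Real.exp s * (1 - Real.sqrt (1 - Real.exp (-2*s))))
      (Real.exp x * (1 - w) + Real.exp x * (0 - u^2/w)) x :=
    (Real.hasDerivAt_exp x).mul ((hasDerivAt_const x (1:ℝ)).sub d4)
  have dB : HasDerivAt (fun s : ℝ => -Real.arcsin (Real.exp (-s))
      + Real.exp s * (1 - Real.sqrt (1 - Real.exp (-2*s))) + Real.exp (-s) / 2)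
      (Real.exp x / 2 * (w - 1) ^ 2) x := by
    have := (d5.neg.add d6).add (d1.div_const 2)
    refine this.congr_deriv (Eq.symm ?_)
    have hsq : (w - 1)^2 = 2 - 2*w - u^2 := by linear_combination hwsq
    have hex : Real.exp x = u⁻¹ := by
      field_simp
      linarith [hux]
    rw [hsq, hex]
    field_simp
    ring
  have heq : Gaux =ᶠ[𝓝 x] (fun s : ℝ => -Real.arcsin (Real.exp (-s))
      + Real.exp s * (1 - Real.sqrt (1 - Real.exp (-2*s))) + Real.exp (-s) / 2) := by
    filter_upwards [isOpen_Ioi.mem_nhds hx] with s hs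
    have hs0 : (0:ℝ) < s := hs
    have hin' : (0:ℝ) ≤ 1 - Real.exp (-2*s) := by
      have : Real.exp (-2*s) ≤ 1 := Real.exp_le_one_iff.mpr (by linarith)
      linarith
    have hws : Real.sqrt (1 - Real.exp (-2*s)) ^ 2 = 1 - Real.exp (-2*s) :=
      Real.sq_sqrt hin'
    have hden : (0:ℝ) < 1 + Real.sqrt (1 - Real.exp (-2*s)) := by positivity
    have hes : Real.exp s * Real.exp (-2*s) = Real.exp (-s) := by
      rw [← Real.exp_add]; ring_nf
    simp only [Gaux]
    congr 1
    congr 1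
    rw [div_eq_iff hden.ne']
    symm
    calc Real.exp s * (1 - Real.sqrt (1 - Real.exp (-2*s)))
          * (1 + Real.sqrt (1 - Real.exp (-2*s)))
        = Real.exp s * Real.exp (-2*s) := by linear_combination (-(Real.exp s)) * hws
      _ = Real.exp (-s) := hes
  exact dB.congr_of_eventuallyEq heq

theorem integral_exp_sqrt_one_sub_exp :
    IntegrableOn (fun s : ℝ => Real.exp s / 2 * (Real.sqrt (1 - Real.exp (-2 * s)) - 1) ^ 2)
      (Ioi 0) volume ∧
    ∫ s in Ioi (0 : ℝ), Real.exp s / 2 * (Real.sqrt (1 - Real.exp (-2 * s)) - 1) ^ 2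
      = (π - 3) / 2 := by
  have hnn : ∀ x ∈ Ioi (0:ℝ),
      0 ≤ Real.exp x / 2 * (Real.sqrt (1 - Real.exp (-2 * x)) - 1) ^ 2 := by
    intro x _; positivity
  have hcont : ContinuousWithinAt Gaux (Ici 0) 0 := Gaux_cont.continuousWithinAt
  have hG0 : Gaux 0 = 3/2 - π/2 := by
    simp [Gaux, Real.arcsin_one]
    ring
  constructor
  · exact integrableOn_Ioi_deriv_of_nonneg hcont Gaux_deriv hnn Gaux_tendsto
  · rw [integral_Ioi_of_hasDerivAt_of_nonneg hcont Gaux_deriv hnn Gaux_tendsto, hG0]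
    ring
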